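/- Let p be an odd prime and let d ≥ 3 be an odd integer with p not dividing d. Then Y + Z divides φ_d in F_p[X,Y,Z], but (Y + Z)^2 does not divide φ_d. -/
import Mathlib

open MvPolynomial

theorem Y_add_Z_divides_phi_d_odd_char
    (p d : ℕ) (hp : p.Prime) (hpodd : Odd p) (hd3 : 3 ≤ d) (hdodd : Odd d) (hpd : ¬ p ∣ d)
    (φ : MvPolynomial (Fin 3) (ZMod p))
    (hφ : (X 0 - X 1) * (X 0 - X 2) * φ =
      X 0 ^ d - X 1 ^ d - X 2 ^ d + (-X 0 + X 1 + X 2) ^ d) :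
    (X 1 + X 2) ∣ φ ∧ ¬ (X 1 + X 2) ^ 2 ∣ φ := by
  haveI := Fact.mk hp
  set R := ZMod p
  -- variable change automorphism
  let τ : MvPolynomial (Fin 3) R ≃ₐ[R] MvPolynomial (Fin 3) R :=
    AlgEquiv.ofAlgHom (aeval ![X 1, X 2, X 0 - X 2]) (aeval ![X 1 + X 2, X 0, X 1])
      (by ext i; fin_cases i <;> simp)
      (by ext i; fin_cases i <;> simp)
  let ψ := τ.trans (MvPolynomial.finSuccEquiv R 2)
  have h1 : ((1 : Fin 3)) = Fin.succ 0 := rfl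
  have h2' : ((2 : Fin 3)) = Fin.succ 1 := rfl
  have hτ0 : τ (X 0) = X 1 := by
    show (aeval ![X 1, X 2, X 0 - X 2] : _ →ₐ[R] _) (X 0) = X 1; simp
  have hτ1 : τ (X 1) = X 2 := by
    show (aeval ![X 1, X 2, X 0 - X 2] : _ →ₐ[R] _) (X 1) = X 2; simp
  have hτ2 : τ (X 2) = X 0 - X 2 := by
    show (aeval ![X 1, X 2, X 0 - X 2] : _ →ₐ[R] _) (X 2) = X 0 - X 2; simp
  have hψ0 : ψ (X 0) = Polynomial.C (X 0) := by
    rw [AlgEquiv.trans_apply, hτ0, h1, finSuccEquiv_X_succ]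
  have hψ1 : ψ (X 1) = Polynomial.C (X 1) := by
    rw [AlgEquiv.trans_apply, hτ1, h2', finSuccEquiv_X_succ]
  have hψ2 : ψ (X 2) = Polynomial.X - Polynomial.C (X 1) := by
    rw [AlgEquiv.trans_apply, hτ2, map_sub, finSuccEquiv_X_zero, h2', finSuccEquiv_X_succ]
  have hψu : ψ (X 1 + X 2) = Polynomial.X := by
    rw [map_add, hψ1, hψ2]; ring
  have key2 : (Polynomial.C (X 0 - X 1) * (Polynomial.C (X 0 + X 1) - Polynomial.X)) * ψ φ
      = Polynomial.C ((X 0 : MvPolynomial (Fin 2) R) ^ d)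
        - Polynomial.C ((X 1 : MvPolynomial (Fin 2) R) ^ d)
        - (Polynomial.X + Polynomial.C (-(X 1 : MvPolynomial (Fin 2) R))) ^ d
        + (Polynomial.X + Polynomial.C (-(X 0 : MvPolynomial (Fin 2) R))) ^ d := by
    have key := congrArg ψ hφ
    simp only [map_mul, map_sub, map_add, map_neg, map_pow, hψ0, hψ1, hψ2] at key
    simp only [map_sub, map_add, map_neg, map_pow]
    linear_combination key
  have hd0 : d ≠ 0 := by omega
  have hdeven : Even (d - 1) := Nat.Odd.sub_odd hdodd odd_one
  have hx01 : (X 0 : MvPolynomial (Fin 2) R) - X 1 ≠ 0 :=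
    sub_ne_zero.mpr (fun hEq => absurd (MvPolynomial.X_injective hEq) (by decide))
  have hx01' : (X 0 : MvPolynomial (Fin 2) R) + X 1 ≠ 0 := by
    intro hEq
    have := congrArg (eval fun i : Fin 2 => if i = 0 then (1 : R) else 0) hEq
    simp at this
  have hc0 : (ψ φ).coeff 0 = 0 := by
    have h := congrArg (fun q => Polynomial.coeff q 0) key2
    simp only [Polynomial.mul_coeff_zero, Polynomial.coeff_sub, Polynomial.coeff_add,
      Polynomial.coeff_C_zero, Polynomial.coeff_X_zero, Polynomial.coeff_X_add_C_pow,
      Nat.sub_zero, Nat.choose_zero_right, Nat.cast_one, mul_one, sub_zero,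
      hdodd.neg_pow] at h
    have hz : ((X 0 - X 1) * (X 0 + X 1) : MvPolynomial (Fin 2) R) * (ψ φ).coeff 0 = 0 := by
      linear_combination h
    rcases mul_eq_zero.mp hz with h' | h'
    · rcases mul_eq_zero.mp h' with h'' | h''
      · exact absurd h'' hx01
      · exact absurd h'' hx01'
    · exact h'
  have hXdvd : Polynomial.X ∣ ψ φ := Polynomial.X_dvd_iff.mpr hc0
  constructor
  · have h := map_dvd ψ.symm hXdvd
    rwa [← hψu, AlgEquiv.symm_apply_apply, AlgEquiv.symm_apply_apply] at h
  · intro hsq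
    have hX2 : (Polynomial.X : Polynomial (MvPolynomial (Fin 2) R)) ^ 2 ∣ ψ φ := by
      have := map_dvd ψ hsq
      rwa [map_pow, hψu] at this
    have hX2F : (Polynomial.X : Polynomial (MvPolynomial (Fin 2) R)) ^ 2 ∣
        (Polynomial.C (X 0 - X 1) * (Polynomial.C (X 0 + X 1) - Polynomial.X)) * ψ φ :=
      hX2.mul_left _
    rw [key2] at hX2F
    have hco1 := (Polynomial.X_pow_dvd_iff.mp hX2F) 1 one_lt_two
    simp only [Polynomial.coeff_sub, Polynomial.coeff_add, Polynomial.coeff_C,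
      Polynomial.coeff_X_add_C_pow, Nat.choose_one_right, hdeven.neg_pow,
      if_neg one_ne_zero] at hco1
    have hd1 : d - 1 ≠ 0 := by omega
    have hev := congrArg (eval fun i : Fin 2 => if i = 0 then (1 : R) else 0) hco1
    simp [hd1, zero_pow] at hev
    exact hpd ((ZMod.natCast_eq_zero_iff d p).mp hev)
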